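/- Let D be a generating class on binary variables (all I_δ = 2) and let b satisfy deg b = 2, F_b ≠ ∅ and Δ̄_b ≠ ∅, with connected components Γ_1,…,Γ_c of G(Δ̄_b). Let G_b be the group of transformations of tables generated by, for each l = 2,…,c, the map that simultaneously swaps the levels 0 and 1 of every variable in Γ_l. Then G_b maps F_b to itself and acts transitively on F_b; that is, for any n, n′ ∈ F_b there exists g ∈ G_b with n′ = g(n). -/
import Mathlib


open Finset

variable {m : ℕ}

/-- The set of cells of an `m`-way contingency table with `I δ` levels for variable `δ`. -/
abbrev Cell (I : Fin m → ℕ) := ∀ δ : Fin m, Fin (I δ)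

/-- Marginal cells for a subset `D` of the variables. -/
abbrev PCell (I : Fin m → ℕ) (D : Finset (Fin m)) := ∀ δ : {x // x ∈ D}, Fin (I δ.1)

/-- Restriction of a cell to the variables in `D`. -/
def restrictC (I : Fin m → ℕ) (D : Finset (Fin m)) (i : Cell I) : PCell I D :=
  fun δ => i δ.1

/-- The `D`-marginal of a contingency table `n`. -/
def margin (I : Fin m → ℕ) (n : Cell I → ℕ) (D : Finset (Fin m)) (f : PCell I D) : ℕ :=
  ∑ i : Cell I, if restrictC I D i = f then n i else 0

/-- The fiber of `b = A n₀`, i.e. all tables sharing all `D`-marginals, `D ∈ 𝒟`, with `n₀`. -/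
def fiber (I : Fin m → ℕ) (𝒟 : Finset (Finset (Fin m))) (n₀ : Cell I → ℕ) :
    Set (Cell I → ℕ) :=
  {n | ∀ D ∈ 𝒟, ∀ f : PCell I D, margin I n D f = margin I n₀ D f}

/-- Sample size (total frequency) of a table. -/
def total (I : Fin m → ℕ) (n : Cell I → ℕ) : ℕ := ∑ i : Cell I, n i

/-- The one-dimensional marginal of `n` for variable `δ` at level `v`. -/
def margin1 (I : Fin m → ℕ) (n : Cell I → ℕ) (δ : Fin m) (v : Fin (I δ)) : ℕ :=
  ∑ i : Cell I, if i δ = v then n i else 0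

/-- For a degree two fiber represented by `n₀`, variable `δ` is degenerate if a single
level has one-dimensional marginal `2`. -/
def Degenerate (I : Fin m → ℕ) (n₀ : Cell I → ℕ) (δ : Fin m) : Prop :=
  ∃ v : Fin (I δ), margin1 I n₀ δ v = 2

/-- Variable `δ` is non-degenerate if two distinct levels each have one-dimensional
marginal `1`. -/
def Nondegenerate (I : Fin m → ℕ) (n₀ : Cell I → ℕ) (δ : Fin m) : Prop :=
  ∃ v w : Fin (I δ), v ≠ w ∧ margin1 I n₀ δ v = 1 ∧ margin1 I n₀ δ w = 1

/-- The independence graph of a generating class `𝒟`: an edge between two distinct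
variables iff some `D ∈ 𝒟` contains both. -/
def indepGraph (𝒟 : Finset (Finset (Fin m))) : SimpleGraph (Fin m) :=
  SimpleGraph.fromRel (fun a b => ∃ D ∈ 𝒟, a ∈ D ∧ b ∈ D)

/-- The set of non-degenerate variables `Δ̄_b`. -/
def ndSet (I : Fin m → ℕ) (n₀ : Cell I → ℕ) : Set (Fin m) :=
  {δ | Nondegenerate I n₀ δ}

/-- `Γ` enumerates the connected components `Γ_1, …, Γ_{d+1}` of the induced subgraph
`G(Δ̄_b)` of the independence graph on the non-degenerate variables. -/
def IsComponents (I : Fin m → ℕ) (𝒟 : Finset (Finset (Fin m))) (n₀ : Cell I → ℕ)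
    (d : ℕ) (Γ : Fin (d + 1) → Set (Fin m)) : Prop :=
  (∀ k, (Γ k).Nonempty) ∧
  (⋃ k, Γ k) = ndSet I n₀ ∧
  (∀ k l, k ≠ l → Disjoint (Γ k) (Γ l)) ∧
  ∀ (k : Fin (d + 1)) (a b : ndSet I n₀), a.1 ∈ Γ k →
    (((indepGraph 𝒟).induce (ndSet I n₀)).Reachable a b ↔ b.1 ∈ Γ k)

open scoped Classical in
/-- The cell obtained by swapping, in each variable `δ ∈ S`, the levels
`lev0 δ` and `lev1 δ`. -/
noncomputable def swapCells (I : Fin m → ℕ) (S : Set (Fin m))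
    (lev0 lev1 : ∀ δ : Fin m, Fin (I δ)) (i : Cell I) : Cell I :=
  fun δ => if δ ∈ S then Equiv.swap (lev0 δ) (lev1 δ) (i δ) else i δ

/-- The induced level-swapping map on tables. -/
noncomputable def actSwap (I : Fin m → ℕ) (S : Set (Fin m))
    (lev0 lev1 : ∀ δ : Fin m, Fin (I δ)) (n : Cell I → ℕ) : Cell I → ℕ :=
  fun i => n (swapCells I S lev0 lev1 i)

/-- The union of the components `Γ_l`, `l = 2, …, c`, selected by the coordinates of the
`GF(2)`-vector `v` that are equal to `1`. -/
def gSet {m : ℕ} (d : ℕ) (Γ : Fin (d + 1) → Set (Fin m)) (v : Fin d → ZMod 2) :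
    Set (Fin m) :=
  ⋃ l : Fin d, if v l = 1 then Γ l.succ else ∅

/-- The composition of the level-swapping generators `σ_l`, `l ∈ L`, of the group `G_b`
for binary variables: `σ_l` simultaneously swaps the levels `0` and `1` of every
variable in the component `Γ_l`. -/
noncomputable def GbApply {m : ℕ} (d : ℕ) (Γ : Fin (d + 1) → Set (Fin m))
    (L : List (Fin (d + 1))) :
    (Cell (fun _ : Fin m => 2) → ℕ) → (Cell (fun _ : Fin m => 2) → ℕ) :=
  L.foldr
    (fun l f =>
      actSwap (fun _ : Fin m => 2) (Γ l) (fun _ => (0 : Fin 2)) (fun _ => (1 : Fin 2)) ∘ f)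
    id

section Helpers

variable {m : ℕ}

/-- A table consisting of two (possibly equal) unit entries. -/
def pairTab {α : Type*} [DecidableEq α] (x y : α) : α → ℕ :=
  fun i => (if i = x then 1 else 0) + (if i = y then 1 else 0)

lemma exists_pairTab {α : Type*} [Fintype α] [DecidableEq α] (n : α → ℕ)
    (h : ∑ i, n i = 2) : ∃ x y : α, n = pairTab x y := by
  have hne : ∃ x ∈ Finset.univ, n x ≠ 0 := by
    by_contra hc
    push_neg at hc
    have : ∑ i, n i = 0 := Finset.sum_eq_zero fun i hi => hc i hi
    omega
  obtain ⟨x, -, hx⟩ := hne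
  have hsplit : n x + ∑ i ∈ Finset.univ.erase x, n i = 2 := by
    rw [Finset.add_sum_erase _ _ (Finset.mem_univ x)]; exact h
  by_cases h2 : n x = 2
  · refine ⟨x, x, funext fun i => ?_⟩
    by_cases hix : i = x
    · subst hix; simp [pairTab, h2]
    · have hz : ∑ i ∈ Finset.univ.erase x, n i = 0 := by omega
      have := (Finset.sum_eq_zero_iff).mp hz i (by simp [hix])
      simp [pairTab, hix, this]
  · have hle : n x ≤ 2 := by rw [← hsplit]; exact Nat.le_add_right _ _
    have h1 : n x = 1 := by omega
    have hrest : ∑ i ∈ Finset.univ.erase x, n i = 1 := by omega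
    have hne2 : ∃ y ∈ Finset.univ.erase x, n y ≠ 0 := by
      by_contra hc
      push_neg at hc
      have : ∑ i ∈ Finset.univ.erase x, n i = 0 := Finset.sum_eq_zero fun i hi => hc i hi
      omega
    obtain ⟨y, hy, hny⟩ := hne2
    have hy1 : n y = 1 := by
      have hle : n y ≤ 1 := by
        rw [← hrest]
        exact Finset.single_le_sum (fun i _ => Nat.zero_le (n i)) hy
      omega
    have hz : ∑ i ∈ (Finset.univ.erase x).erase y, n i = 0 := by
      have := Finset.add_sum_erase _ n hy
      omega
    refine ⟨x, y, funext fun i => ?_⟩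
    have hxy : y ≠ x := (Finset.mem_erase.mp hy).1
    by_cases hix : i = x
    · subst hix; simp [pairTab, h1, Ne.symm hxy]
    · by_cases hiy : i = y
      · subst hiy; simp [pairTab, hy1, hix]
      · have : n i = 0 := (Finset.sum_eq_zero_iff).mp hz i (by simp [hix, hiy])
        simp [pairTab, hix, hiy, this]

lemma margin_pairTab (I : Fin m → ℕ) (x y : Cell I) (D : Finset (Fin m)) (f : PCell I D) :
    margin I (pairTab x y) D f =
      (if restrictC I D x = f then 1 else 0) + (if restrictC I D y = f then 1 else 0) := by
  have hs : ∀ (z : Cell I), (∑ i : Cell I, if restrictC I D i = f then (if i = z then 1 else 0) else 0)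
      = (if restrictC I D z = f then 1 else 0) := by
    intro z
    rw [Finset.sum_congr rfl (fun i _ => show (if restrictC I D i = f then (if i = z then 1 else 0) else 0)
        = (if i = z then (if restrictC I D z = f then 1 else 0) else 0) by
      split_ifs <;> simp_all)]
    simp
  calc margin I (pairTab x y) D f
      = (∑ i : Cell I, ((if restrictC I D i = f then (if i = x then 1 else 0) else 0)
          + (if restrictC I D i = f then (if i = y then 1 else 0) else 0))) := by
        unfold margin pairTab
        refine Finset.sum_congr rfl fun i _ => ?_
        split_ifs <;> simp
    _ = _ := by rw [Finset.sum_add_distrib, hs x, hs y]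

lemma margin1_pairTab (I : Fin m → ℕ) (x y : Cell I) (δ : Fin m) (v : Fin (I δ)) :
    margin1 I (pairTab x y) δ v =
      (if x δ = v then 1 else 0) + (if y δ = v then 1 else 0) := by
  have hs : ∀ (z : Cell I), (∑ i : Cell I, if i δ = v then (if i = z then 1 else 0) else 0)
      = (if z δ = v then 1 else 0) := by
    intro z
    rw [Finset.sum_congr rfl (fun i _ => show (if i δ = v then (if i = z then 1 else 0) else 0)
        = (if i = z then (if z δ = v then 1 else 0) else 0) by
      split_ifs <;> simp_all)]
    simp
  calc margin1 I (pairTab x y) δ v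
      = (∑ i : Cell I, ((if i δ = v then (if i = x then 1 else 0) else 0)
          + (if i δ = v then (if i = y then 1 else 0) else 0))) := by
        unfold margin1 pairTab
        refine Finset.sum_congr rfl fun i _ => ?_
        split_ifs <;> simp
    _ = _ := by rw [Finset.sum_add_distrib, hs x, hs y]

lemma indicator_pair_eq {β : Type*} [DecidableEq β] {a b c d : β}
    (h : ∀ f : β, ((if a = f then 1 else 0) + (if b = f then 1 else 0) : ℕ)
      = (if c = f then 1 else 0) + (if d = f then 1 else 0)) :
    (a = c ∧ b = d) ∨ (a = d ∧ b = c) := by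
  by_cases hac : a = c
  · subst hac
    have hd := h d
    left
    refine ⟨rfl, ?_⟩
    by_cases hbd : b = d
    · exact hbd
    · exfalso; split_ifs at hd <;> simp_all
  · right
    have hc := h c
    have hbc : b = c := by
      by_contra hbc; split_ifs at hc <;> simp_all
    subst hbc
    refine ⟨?_, rfl⟩
    have hd := h d
    by_cases had : a = d
    · exact had
    · exfalso; split_ifs at hd <;> simp_all

lemma restrictC_eq_iff {I : Fin m → ℕ} {u x : Cell I} {D : Finset (Fin m)} :
    restrictC I D u = restrictC I D x ↔ ∀ δ ∈ D, u δ = x δ := by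
  constructor
  · intro h δ hδ; exact congrFun h ⟨δ, hδ⟩
  · intro h; funext δ; exact h δ.1 δ.2

end Helpers
section SwapHelpers
open scoped Classical

variable {m : ℕ}

lemma fin2_swap_ne {a b : Fin 2} (h : a ≠ b) : Equiv.swap (0 : Fin 2) 1 a = b := by
  revert h; revert a b; decide

/-- abbreviation for the binary swap of cells -/
noncomputable abbrev sw (S : Set (Fin m)) (i : Cell (fun _ : Fin m => 2)) :
    Cell (fun _ : Fin m => 2) :=
  swapCells (fun _ : Fin m => 2) S (fun _ => (0 : Fin 2)) (fun _ => (1 : Fin 2)) i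

lemma sw_apply (S : Set (Fin m)) (i : Cell (fun _ : Fin m => 2)) (δ : Fin m) :
    sw S i δ = if δ ∈ S then Equiv.swap (0 : Fin 2) 1 (i δ) else i δ := rfl

lemma sw_sw (S : Set (Fin m)) (i : Cell (fun _ : Fin m => 2)) : sw S (sw S i) = i := by
  funext δ
  rw [sw_apply, sw_apply]
  by_cases h : δ ∈ S <;> simp [h]

lemma sw_eq_iff {S : Set (Fin m)} {i j : Cell (fun _ : Fin m => 2)} :
    sw S i = j ↔ i = sw S j := by
  constructor
  · intro h; rw [← h, sw_sw]
  · intro h; rw [h, sw_sw]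

lemma sw_union {S T : Set (Fin m)} (h : Disjoint S T) (i : Cell (fun _ : Fin m => 2)) :
    sw S (sw T i) = sw (S ∪ T) i := by
  funext δ
  rw [sw_apply, sw_apply, sw_apply]
  by_cases hS : δ ∈ S
  · have hT : δ ∉ T := fun hT => (Set.disjoint_left.mp h hS) hT
    simp [hS, hT]
  · by_cases hT : δ ∈ T <;> simp [hS, hT]

lemma actSwap_eq (S : Set (Fin m)) (n : Cell (fun _ : Fin m => 2) → ℕ) :
    actSwap (fun _ : Fin m => 2) S (fun _ => (0 : Fin 2)) (fun _ => (1 : Fin 2)) n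
      = fun i => n (sw S i) := rfl

lemma actSwap_pairTab (S : Set (Fin m)) (x y : Cell (fun _ : Fin m => 2)) :
    actSwap (fun _ : Fin m => 2) S (fun _ => (0 : Fin 2)) (fun _ => (1 : Fin 2)) (pairTab x y)
      = pairTab (sw S x) (sw S y) := by
  funext i
  show pairTab x y (sw S i) = pairTab (sw S x) (sw S y) i
  unfold pairTab
  have h1 : (sw S i = x) ↔ (i = sw S x) := sw_eq_iff
  have h2 : (sw S i = y) ↔ (i = sw S y) := sw_eq_iff
  rw [if_congr h1 rfl rfl, if_congr h2 rfl rfl]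

lemma actSwap_actSwap (S : Set (Fin m)) (n : Cell (fun _ : Fin m => 2) → ℕ) :
    actSwap (fun _ : Fin m => 2) S (fun _ => (0 : Fin 2)) (fun _ => (1 : Fin 2))
      (actSwap (fun _ : Fin m => 2) S (fun _ => (0 : Fin 2)) (fun _ => (1 : Fin 2)) n) = n := by
  funext i
  show n (sw S (sw S i)) = n i
  rw [sw_sw]

lemma GbApply_cons (d : ℕ) (Γ : Fin (d + 1) → Set (Fin m)) (l : Fin (d + 1))
    (L : List (Fin (d + 1))) (n : Cell (fun _ : Fin m => 2) → ℕ) :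
    GbApply d Γ (l :: L) n
      = actSwap (fun _ : Fin m => 2) (Γ l) (fun _ => (0 : Fin 2)) (fun _ => (1 : Fin 2))
          (GbApply d Γ L n) := rfl

lemma GbApply_append (d : ℕ) (Γ : Fin (d + 1) → Set (Fin m)) (A B : List (Fin (d + 1)))
    (n : Cell (fun _ : Fin m => 2) → ℕ) :
    GbApply d Γ (A ++ B) n = GbApply d Γ A (GbApply d Γ B n) := by
  induction A with
  | nil => rfl
  | cons l A ih => rw [List.cons_append, GbApply_cons, GbApply_cons, ih]

lemma GbApply_eq_actSwap (d : ℕ) (Γ : Fin (d + 1) → Set (Fin m))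
    (hdisj : ∀ k l, k ≠ l → Disjoint (Γ k) (Γ l))
    (L : List (Fin (d + 1))) (hL : L.Nodup) (n : Cell (fun _ : Fin m => 2) → ℕ) :
    GbApply d Γ L n
      = actSwap (fun _ : Fin m => 2) (⋃ l ∈ L, Γ l) (fun _ => (0 : Fin 2))
          (fun _ => (1 : Fin 2)) n := by
  induction L with
  | nil =>
    funext i
    show n i = n (sw _ i)
    congr 1
    funext δ
    rw [sw_apply]
    simp
  | cons l L ih =>
    rw [GbApply_cons, ih (List.Nodup.of_cons hL)]
    funext i
    show n (sw (⋃ l' ∈ L, Γ l') (sw (Γ l) i)) = n (sw (⋃ l' ∈ l :: L, Γ l') i)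
    have hd : Disjoint (⋃ l' ∈ L, Γ l') (Γ l) := by
      rw [Set.disjoint_left]
      intro a ha hal
      simp only [Set.mem_iUnion] at ha
      obtain ⟨l', hl', ha'⟩ := ha
      have hne : l' ≠ l := by
        rintro rfl
        exact (List.nodup_cons.mp hL).1 hl'
      exact Set.disjoint_left.mp (hdisj l' l hne) ha' hal
    rw [sw_union hd]
    congr 1
    have : (⋃ l' ∈ L, Γ l') ∪ Γ l = ⋃ l' ∈ l :: L, Γ l' := by
      ext a
      simp only [Set.mem_union, Set.mem_iUnion, List.mem_cons]
      constructor
      · rintro (⟨l', hl', h⟩ | h)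
        · exact ⟨l', Or.inr hl', h⟩
        · exact ⟨l, Or.inl rfl, h⟩
      · rintro ⟨l', (rfl | hl'), h⟩
        · exact Or.inr h
        · exact Or.inl ⟨l', hl', h⟩
    rw [this]

end SwapHelpers
section FiberHelpers

variable {m : ℕ}

lemma mem_fiber_pair_iff (𝒟 : Finset (Finset (Fin m))) (I : Fin m → ℕ)
    (x y u v : Cell I) :
    pairTab u v ∈ fiber I 𝒟 (pairTab x y) ↔
      ∀ D ∈ 𝒟, (restrictC I D u = restrictC I D x ∧ restrictC I D v = restrictC I D y)
        ∨ (restrictC I D u = restrictC I D y ∧ restrictC I D v = restrictC I D x) := by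
  constructor
  · intro h D hD
    have h' : ∀ f : PCell I D,
        ((if restrictC I D u = f then 1 else 0) + (if restrictC I D v = f then 1 else 0) : ℕ)
          = (if restrictC I D x = f then 1 else 0) + (if restrictC I D y = f then 1 else 0) := by
      intro f
      have := h D hD f
      rwa [margin_pairTab, margin_pairTab] at this
    exact indicator_pair_eq h'
  · intro h D hD f
    rw [margin_pairTab, margin_pairTab]
    rcases h D hD with ⟨h1, h2⟩ | ⟨h1, h2⟩ <;> rw [h1, h2]
    exact add_comm _ _

lemma nondeg_pair_iff (x y : Cell (fun _ : Fin m => 2)) (δ : Fin m) :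
    Nondegenerate (fun _ : Fin m => 2) (pairTab x y) δ ↔ x δ ≠ y δ := by
  constructor
  · rintro ⟨v, w, hvw, h1, h2⟩ hxy
    rw [margin1_pairTab] at h1 h2
    rw [hxy] at h1 h2
    split_ifs at h1 h2 <;> simp_all
  · intro hxy
    refine ⟨x δ, y δ, hxy, ?_, ?_⟩ <;> rw [margin1_pairTab] <;>
      simp [hxy, Ne.symm hxy]

lemma reachable_constant {V : Type*} {G : SimpleGraph V} {s : Set V} (P : V → Prop)
    (h : ∀ a b : s, (G.induce s).Adj a b → (P a.1 ↔ P b.1)) :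
    ∀ a b : s, (G.induce s).Reachable a b → (P a.1 ↔ P b.1) := by
  intro a b hr
  obtain ⟨w⟩ := hr
  induction w with
  | nil => exact Iff.rfl
  | cons hadj _ ih => exact (h _ _ hadj).trans ih

lemma indep_induce_adj {𝒟 : Finset (Finset (Fin m))} {s : Set (Fin m)}
    {a b : s} (hne : a.1 ≠ b.1) {D : Finset (Fin m)} (hD : D ∈ 𝒟)
    (ha : a.1 ∈ D) (hb : b.1 ∈ D) :
    ((indepGraph 𝒟).induce s).Adj a b := by
  show (indepGraph 𝒟).Adj a.1 b.1
  rw [indepGraph, SimpleGraph.fromRel_adj]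
  exact ⟨hne, Or.inl ⟨D, hD, ha, hb⟩⟩

lemma indep_induce_adj_dest {𝒟 : Finset (Finset (Fin m))} {s : Set (Fin m)}
    {a b : s} (h : ((indepGraph 𝒟).induce s).Adj a b) :
    ∃ D ∈ 𝒟, a.1 ∈ D ∧ b.1 ∈ D := by
  have h' : (indepGraph 𝒟).Adj a.1 b.1 := h
  rw [indepGraph, SimpleGraph.fromRel_adj] at h'
  rcases h'.2 with ⟨D, hD, h1, h2⟩ | ⟨D, hD, h1, h2⟩
  · exact ⟨D, hD, h1, h2⟩
  · exact ⟨D, hD, h2, h1⟩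

end FiberHelpers
section CoreHelpers

variable {m : ℕ}

lemma pairTab_comm {α : Type*} [DecidableEq α] (x y : α) : pairTab x y = pairTab y x :=
  funext fun i => add_comm _ _

lemma ndSet_pair_eq (x y : Cell (fun _ : Fin m => 2)) :
    ndSet (fun _ : Fin m => 2) (pairTab x y) = {δ | x δ ≠ y δ} :=
  Set.ext fun δ => nondeg_pair_iff x y δ

lemma swap_mem_fiber (𝒟 : Finset (Finset (Fin m))) (x y : Cell (fun _ : Fin m => 2))
    (d : ℕ) (Γ : Fin (d + 1) → Set (Fin m))
    (hcomp : IsComponents (fun _ : Fin m => 2) 𝒟 (pairTab x y) d Γ)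
    (l : Fin (d + 1)) (u v : Cell (fun _ : Fin m => 2))
    (hf : pairTab u v ∈ fiber (fun _ : Fin m => 2) 𝒟 (pairTab x y)) :
    pairTab (sw (Γ l) u) (sw (Γ l) v) ∈ fiber (fun _ : Fin m => 2) 𝒟 (pairTab x y) := by
  obtain ⟨hne, hU, hdisj, hreach⟩ := hcomp
  have hΓsub : ∀ k, Γ k ⊆ ndSet (fun _ : Fin m => 2) (pairTab x y) := by
    intro k
    rw [← hU]
    exact Set.subset_iUnion Γ k
  have hΓnd : ∀ δ ∈ Γ l, x δ ≠ y δ := by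
    intro δ hδ
    have := hΓsub l hδ
    rw [ndSet_pair_eq] at this
    exact this
  rw [mem_fiber_pair_iff] at hf ⊢
  intro D hD
  by_cases hex : ∃ δ₀, δ₀ ∈ D ∧ δ₀ ∈ Γ l
  · obtain ⟨δ₀, hδ₀D, hδ₀Γ⟩ := hex
    have hall : ∀ δ ∈ D, x δ ≠ y δ → δ ∈ Γ l := by
      intro δ hδD hδnd
      by_cases hδδ₀ : δ = δ₀
      · subst hδδ₀; exact hδ₀Γ
      · have ha : δ₀ ∈ ndSet (fun _ : Fin m => 2) (pairTab x y) := hΓsub l hδ₀Γ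
        have hb : δ ∈ ndSet (fun _ : Fin m => 2) (pairTab x y) := by
          rw [ndSet_pair_eq]; exact hδnd
        have adj : ((indepGraph 𝒟).induce (ndSet (fun _ : Fin m => 2) (pairTab x y))).Adj
            ⟨δ₀, ha⟩ ⟨δ, hb⟩ :=
          indep_induce_adj (Ne.symm hδδ₀) hD hδ₀D hδD
        exact (hreach l ⟨δ₀, ha⟩ ⟨δ, hb⟩ hδ₀Γ).mp adj.reachable
    rcases hf D hD with ⟨h1, h2⟩ | ⟨h1, h2⟩
    · right
      rw [restrictC_eq_iff] at h1 h2 ⊢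
      rw [restrictC_eq_iff]
      constructor
      · intro δ hδ
        rw [sw_apply]
        by_cases hδΓ : δ ∈ Γ l
        · simp only [hδΓ, if_true]
          rw [h1 δ hδ]
          exact fin2_swap_ne (hΓnd δ hδΓ)
        · simp only [hδΓ, if_false]
          have hdd : x δ = y δ := by
            by_contra hnd
            exact hδΓ (hall δ hδ hnd)
          rw [h1 δ hδ, hdd]
      · intro δ hδ
        rw [sw_apply]
        by_cases hδΓ : δ ∈ Γ l
        · simp only [hδΓ, if_true]
          rw [h2 δ hδ]
          exact fin2_swap_ne (Ne.symm (hΓnd δ hδΓ))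
        · simp only [hδΓ, if_false]
          have hdd : x δ = y δ := by
            by_contra hnd
            exact hδΓ (hall δ hδ hnd)
          rw [h2 δ hδ, hdd]
    · left
      rw [restrictC_eq_iff] at h1 h2 ⊢
      rw [restrictC_eq_iff]
      constructor
      · intro δ hδ
        rw [sw_apply]
        by_cases hδΓ : δ ∈ Γ l
        · simp only [hδΓ, if_true]
          rw [h1 δ hδ]
          exact fin2_swap_ne (Ne.symm (hΓnd δ hδΓ))
        · simp only [hδΓ, if_false]
          have hdd : x δ = y δ := by
            by_contra hnd
            exact hδΓ (hall δ hδ hnd)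
          rw [h1 δ hδ, ← hdd]
      · intro δ hδ
        rw [sw_apply]
        by_cases hδΓ : δ ∈ Γ l
        · simp only [hδΓ, if_true]
          rw [h2 δ hδ]
          exact fin2_swap_ne (hΓnd δ hδΓ)
        · simp only [hδΓ, if_false]
          have hdd : x δ = y δ := by
            by_contra hnd
            exact hδΓ (hall δ hδ hnd)
          rw [h2 δ hδ, ← hdd]
  · have hres : ∀ w : Cell (fun _ : Fin m => 2),
        restrictC (fun _ : Fin m => 2) D (sw (Γ l) w) = restrictC (fun _ : Fin m => 2) D w := by
      intro w
      rw [restrictC_eq_iff]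
      intro δ hδ
      rw [sw_apply]
      have : δ ∉ Γ l := fun h => hex ⟨δ, hδ, h⟩
      simp [this]
    rw [hres u, hres v]
    exact hf D hD

end CoreHelpers
section TransHelper

open scoped Classical

variable {m : ℕ}

lemma exists_swapset (𝒟 : Finset (Finset (Fin m)))
    (hcov : ∀ δ : Fin m, ∃ D ∈ 𝒟, δ ∈ D)
    (x y : Cell (fun _ : Fin m => 2))
    (d : ℕ) (Γ : Fin (d + 1) → Set (Fin m))
    (hcomp : IsComponents (fun _ : Fin m => 2) 𝒟 (pairTab x y) d Γ)
    (u v : Cell (fun _ : Fin m => 2))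
    (hf : pairTab u v ∈ fiber (fun _ : Fin m => 2) 𝒟 (pairTab x y)) :
    ∃ K : Finset (Fin (d + 1)), (0 : Fin (d + 1)) ∉ K ∧
      ((sw (⋃ l ∈ K, Γ l) x = u ∧ sw (⋃ l ∈ K, Γ l) y = v) ∨
       (sw (⋃ l ∈ K, Γ l) x = v ∧ sw (⋃ l ∈ K, Γ l) y = u)) := by
  obtain ⟨hnem, hU, hdisj, hreach⟩ := hcomp
  have hΓsub : ∀ k, Γ k ⊆ ndSet (fun _ : Fin m => 2) (pairTab x y) := by
    intro k; rw [← hU]; exact Set.subset_iUnion Γ k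
  have hΓnd : ∀ k, ∀ δ ∈ Γ k, x δ ≠ y δ := by
    intro k δ hδ
    have := hΓsub k hδ
    rw [ndSet_pair_eq] at this
    exact this
  rw [mem_fiber_pair_iff] at hf
  have pointFact : ∀ δ, (u δ = x δ ∧ v δ = y δ) ∨ (u δ = y δ ∧ v δ = x δ) := by
    intro δ
    obtain ⟨D, hD, hδ⟩ := hcov δ
    rcases hf D hD with ⟨h1, h2⟩ | ⟨h1, h2⟩
    · exact Or.inl ⟨restrictC_eq_iff.mp h1 δ hδ, restrictC_eq_iff.mp h2 δ hδ⟩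
    · exact Or.inr ⟨restrictC_eq_iff.mp h1 δ hδ, restrictC_eq_iff.mp h2 δ hδ⟩
  set S : Set (Fin m) := {δ | u δ ≠ x δ} with hSdef
  have hSv : ∀ δ ∈ S, u δ = y δ ∧ v δ = x δ := by
    intro δ hδ
    rcases pointFact δ with ⟨h1, h2⟩ | h
    · exact absurd h1 hδ
    · exact h
  have hS_nd : ∀ δ ∈ S, x δ ≠ y δ := by
    intro δ hδ heq
    exact hδ ((hSv δ hδ).1.trans heq.symm)
  have hSnot : ∀ δ, δ ∉ S → u δ = x δ ∧ v δ = y δ := by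
    intro δ hδ
    have hux : u δ = x δ := not_not.mp hδ
    rcases pointFact δ with ⟨h1, h2⟩ | ⟨h1, h2⟩
    · exact ⟨hux, h2⟩
    · refine ⟨hux, ?_⟩
      rw [h2, ← hux, h1]
  have hedge : ∀ a b : ndSet (fun _ : Fin m => 2) (pairTab x y),
      ((indepGraph 𝒟).induce (ndSet (fun _ : Fin m => 2) (pairTab x y))).Adj a b →
      (a.1 ∈ S ↔ b.1 ∈ S) := by
    intro a b hadj
    obtain ⟨D, hD, haD, hbD⟩ := indep_induce_adj_dest hadj
    have hand : x a.1 ≠ y a.1 := (nondeg_pair_iff x y a.1).mp a.2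
    have hbnd : x b.1 ≠ y b.1 := (nondeg_pair_iff x y b.1).mp b.2
    rcases hf D hD with ⟨h1, -⟩ | ⟨h1, -⟩
    · have ha : a.1 ∉ S := not_not.mpr (restrictC_eq_iff.mp h1 a.1 haD)
      have hb : b.1 ∉ S := not_not.mpr (restrictC_eq_iff.mp h1 b.1 hbD)
      simp [ha, hb]
    · have ha : a.1 ∈ S := by
        show u a.1 ≠ x a.1
        rw [restrictC_eq_iff.mp h1 a.1 haD]
        exact fun h => hand h.symm
      have hb : b.1 ∈ S := by
        show u b.1 ≠ x b.1
        rw [restrictC_eq_iff.mp h1 b.1 hbD]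
        exact fun h => hbnd h.symm
      simp [ha, hb]
  have hconst := reachable_constant (fun δ => δ ∈ S) hedge
  have hcompconst : ∀ k, (∀ δ ∈ Γ k, δ ∈ S) ∨ (∀ δ ∈ Γ k, δ ∉ S) := by
    intro k
    obtain ⟨a, ha⟩ := hnem k
    have haN : a ∈ ndSet (fun _ : Fin m => 2) (pairTab x y) := hΓsub k ha
    by_cases haS : a ∈ S
    · left
      intro δ hδ
      have hδN : δ ∈ ndSet (fun _ : Fin m => 2) (pairTab x y) := hΓsub k hδ
      have hr := (hreach k ⟨a, haN⟩ ⟨δ, hδN⟩ ha).mpr hδ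
      exact (hconst ⟨a, haN⟩ ⟨δ, hδN⟩ hr).mp haS
    · right
      intro δ hδ hδS
      have hδN : δ ∈ ndSet (fun _ : Fin m => 2) (pairTab x y) := hΓsub k hδ
      have hr := (hreach k ⟨a, haN⟩ ⟨δ, hδN⟩ ha).mpr hδ
      exact haS ((hconst ⟨a, haN⟩ ⟨δ, hδN⟩ hr).mpr hδS)
  by_cases h0 : (∀ δ ∈ Γ 0, δ ∈ S)
  · -- Γ 0 ⊆ S : use the complementary components
    set K : Finset (Fin (d + 1)) := Finset.univ.filter (fun k => ∀ δ ∈ Γ k, δ ∉ S) with hK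
    have h0K : (0 : Fin (d + 1)) ∉ K := by
      intro h0K
      obtain ⟨a, ha⟩ := hnem 0
      exact (Finset.mem_filter.mp h0K).2 a ha (h0 a ha)
    have hUmem : ∀ δ, δ ∈ (⋃ l ∈ K, Γ l) ↔ (x δ ≠ y δ ∧ δ ∉ S) := by
      intro δ
      simp only [Set.mem_iUnion, exists_prop]
      constructor
      · rintro ⟨k, hk, hδ⟩
        exact ⟨hΓnd k δ hδ, (Finset.mem_filter.mp hk).2 δ hδ⟩
      · rintro ⟨hnd, hδS⟩
        have : δ ∈ ndSet (fun _ : Fin m => 2) (pairTab x y) := by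
          rw [ndSet_pair_eq]; exact hnd
        rw [← hU] at this
        obtain ⟨k, hk⟩ := Set.mem_iUnion.mp this
        rcases hcompconst k with hc | hc
        · exact absurd (hc δ hk) hδS
        · exact ⟨k, Finset.mem_filter.mpr ⟨Finset.mem_univ k, hc⟩, hk⟩
    refine ⟨K, h0K, Or.inr ⟨?_, ?_⟩⟩
    · funext δ
      rw [sw_apply]
      by_cases hδ : δ ∈ ⋃ l ∈ K, Γ l
      · obtain ⟨hnd, hδS⟩ := (hUmem δ).mp hδ
        simp only [hδ, if_true]
        rw [(hSnot δ hδS).2]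
        exact fin2_swap_ne hnd
      · simp only [hδ, if_false]
        by_cases hδS : δ ∈ S
        · exact ((hSv δ hδS).2).symm
        · have hnd : ¬ x δ ≠ y δ := fun hnd => hδ ((hUmem δ).mpr ⟨hnd, hδS⟩)
          rw [(hSnot δ hδS).2, ← not_not.mp hnd]
    · funext δ
      rw [sw_apply]
      by_cases hδ : δ ∈ ⋃ l ∈ K, Γ l
      · obtain ⟨hnd, hδS⟩ := (hUmem δ).mp hδ
        simp only [hδ, if_true]
        rw [(hSnot δ hδS).1]
        exact fin2_swap_ne (Ne.symm hnd)
      · simp only [hδ, if_false]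
        by_cases hδS : δ ∈ S
        · exact ((hSv δ hδS).1).symm
        · have hnd : ¬ x δ ≠ y δ := fun hnd => hδ ((hUmem δ).mpr ⟨hnd, hδS⟩)
          rw [(hSnot δ hδS).1, not_not.mp hnd]
  · -- Γ 0 not contained in S : S itself is a union of components not containing 0
    set K : Finset (Fin (d + 1)) := Finset.univ.filter (fun k => ∀ δ ∈ Γ k, δ ∈ S) with hK
    have h0K : (0 : Fin (d + 1)) ∉ K := by
      intro h0K
      exact h0 (Finset.mem_filter.mp h0K).2
    have hUmem : (⋃ l ∈ K, Γ l) = S := by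
      ext δ
      simp only [Set.mem_iUnion, exists_prop]
      constructor
      · rintro ⟨k, hk, hδ⟩
        exact (Finset.mem_filter.mp hk).2 δ hδ
      · intro hδS
        have : δ ∈ ndSet (fun _ : Fin m => 2) (pairTab x y) := by
          rw [ndSet_pair_eq]; exact hS_nd δ hδS
        rw [← hU] at this
        obtain ⟨k, hk⟩ := Set.mem_iUnion.mp this
        rcases hcompconst k with hc | hc
        · exact ⟨k, Finset.mem_filter.mpr ⟨Finset.mem_univ k, hc⟩, hk⟩
        · exact absurd hδS (hc δ hk)
    refine ⟨K, h0K, Or.inl ⟨?_, ?_⟩⟩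
    · funext δ
      rw [sw_apply, hUmem]
      by_cases hδS : δ ∈ S
      · simp only [hδS, if_true]
        rw [(hSv δ hδS).1]
        exact fin2_swap_ne (hS_nd δ hδS)
      · simp only [hδS, if_false]
        exact ((hSnot δ hδS).1).symm
    · funext δ
      rw [sw_apply, hUmem]
      by_cases hδS : δ ∈ S
      · simp only [hδS, if_true]
        rw [(hSv δ hδS).2]
        exact fin2_swap_ne (Ne.symm (hS_nd δ hδS))
      · simp only [hδS, if_false]
        exact ((hSnot δ hδS).2).symm

end TransHelper
/-- for binary variables, the group `G_b` generated by the maps swapping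
the levels of all variables of a component `Γ_l`, `l = 2, …, c`, maps the degree two
fiber `F_b` to itself and acts transitively on it. -/
theorem statement17 (m : ℕ) (𝒟 : Finset (Finset (Fin m)))
    (hcov : ∀ δ : Fin m, ∃ D ∈ 𝒟, δ ∈ D)
    (n₀ : Cell (fun _ : Fin m => 2) → ℕ)
    (hdeg : ∀ n ∈ fiber (fun _ : Fin m => 2) 𝒟 n₀, total (fun _ : Fin m => 2) n = 2)
    (d : ℕ) (Γ : Fin (d + 1) → Set (Fin m))
    (hcomp : IsComponents (fun _ : Fin m => 2) 𝒟 n₀ d Γ) :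
    (∀ L : List (Fin (d + 1)), (∀ l ∈ L, l ≠ 0) →
      Set.BijOn (GbApply d Γ L) (fiber (fun _ : Fin m => 2) 𝒟 n₀)
        (fiber (fun _ : Fin m => 2) 𝒟 n₀)) ∧
    (∀ n ∈ fiber (fun _ : Fin m => 2) 𝒟 n₀,
      ∀ n' ∈ fiber (fun _ : Fin m => 2) 𝒟 n₀,
      ∃ L : List (Fin (d + 1)), (∀ l ∈ L, l ≠ 0) ∧ n' = GbApply d Γ L n) := by
  have hfib0 : n₀ ∈ fiber (fun _ : Fin m => 2) 𝒟 n₀ := fun D hD f => rfl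
  have ht0 : total (fun _ : Fin m => 2) n₀ = 2 := hdeg n₀ hfib0
  obtain ⟨x, y, rfl⟩ := exists_pairTab n₀ ht0
  have hdisj := hcomp.2.2.1
  have hmaps : ∀ l : Fin (d + 1),
      Set.MapsTo (actSwap (fun _ : Fin m => 2) (Γ l) (fun _ => (0 : Fin 2)) (fun _ => (1 : Fin 2)))
        (fiber (fun _ : Fin m => 2) 𝒟 (pairTab x y))
        (fiber (fun _ : Fin m => 2) 𝒟 (pairTab x y)) := by
    intro l n hn
    have ht := hdeg n hn
    obtain ⟨u, v, rfl⟩ := exists_pairTab n ht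
    rw [actSwap_pairTab]
    exact swap_mem_fiber 𝒟 x y d Γ hcomp l u v hn
  have hgen : ∀ l : Fin (d + 1),
      Set.BijOn (actSwap (fun _ : Fin m => 2) (Γ l) (fun _ => (0 : Fin 2)) (fun _ => (1 : Fin 2)))
        (fiber (fun _ : Fin m => 2) 𝒟 (pairTab x y))
        (fiber (fun _ : Fin m => 2) 𝒟 (pairTab x y)) := by
    intro l
    refine ⟨hmaps l, ?_, ?_⟩
    · intro n1 _ n2 _ heq
      have := congrArg (actSwap (fun _ : Fin m => 2) (Γ l) (fun _ => (0 : Fin 2)) (fun _ => (1 : Fin 2))) heq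
      rwa [actSwap_actSwap, actSwap_actSwap] at this
    · intro n hn
      exact ⟨actSwap (fun _ : Fin m => 2) (Γ l) (fun _ => (0 : Fin 2)) (fun _ => (1 : Fin 2)) n,
        hmaps l hn, actSwap_actSwap (Γ l) n⟩
  constructor
  · intro L hL
    clear hL
    induction L with
    | nil => exact Set.bijOn_id _
    | cons l L ih =>
      have hcons : GbApply d Γ (l :: L)
          = (actSwap (fun _ : Fin m => 2) (Γ l) (fun _ => (0 : Fin 2)) (fun _ => (1 : Fin 2)))
            ∘ GbApply d Γ L := rfl
      rw [hcons]
      exact Set.BijOn.comp (hgen l) ih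
  · intro n hn n' hn'
    obtain ⟨u, v, rfl⟩ := exists_pairTab n (hdeg n hn)
    obtain ⟨u', v', rfl⟩ := exists_pairTab n' (hdeg n' hn')
    obtain ⟨K1, hK1, hc1⟩ := exists_swapset 𝒟 hcov x y d Γ hcomp u v hn
    obtain ⟨K2, hK2, hc2⟩ := exists_swapset 𝒟 hcov x y d Γ hcomp u' v' hn'
    refine ⟨K2.toList ++ K1.toList, ?_, ?_⟩
    · intro l hl
      rcases List.mem_append.mp hl with h | h
      · exact fun h0 => hK2 (h0 ▸ Finset.mem_toList.mp h)
      · exact fun h0 => hK1 (h0 ▸ Finset.mem_toList.mp h)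
    · have hUl : ∀ K : Finset (Fin (d + 1)), (⋃ l ∈ K.toList, Γ l) = ⋃ l ∈ K, Γ l := by
        intro K
        ext a
        simp [Finset.mem_toList]
      rw [GbApply_append, GbApply_eq_actSwap d Γ hdisj K1.toList (Finset.nodup_toList K1),
        GbApply_eq_actSwap d Γ hdisj K2.toList (Finset.nodup_toList K2), hUl, hUl]
      have h1 : actSwap (fun _ : Fin m => 2) (⋃ l ∈ K1, Γ l) (fun _ => (0 : Fin 2))
          (fun _ => (1 : Fin 2)) (pairTab u v) = pairTab x y := by
        rw [actSwap_pairTab]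
        rcases hc1 with ⟨ha, hb⟩ | ⟨ha, hb⟩
        · rw [← ha, ← hb, sw_sw, sw_sw]
        · rw [← hb, ← ha, sw_sw, sw_sw]
          exact (pairTab_comm x y).symm
      have h2 : actSwap (fun _ : Fin m => 2) (⋃ l ∈ K2, Γ l) (fun _ => (0 : Fin 2))
          (fun _ => (1 : Fin 2)) (pairTab x y) = pairTab u' v' := by
        rw [actSwap_pairTab]
        rcases hc2 with ⟨ha, hb⟩ | ⟨ha, hb⟩
        · rw [ha, hb]
        · rw [ha, hb]
          exact pairTab_comm v' u'
      rw [h1, h2]
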